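/- arXiv:2409.01340 — 2 statements merged into one kernel-verified Lean document; each statement's English description precedes it below -/
import Mathlib

section
/- Let λ : ℝ^d → ℝ and p : ℝ^d → ℝ be continuously differentiable, and let ν_J be a finite Borel measure on ℝ^d with compact support. Define the vector field I : ℝ^d → ℝ^d by I(x) = ∫_{ℝ^d} ∫_0^1 z λ(x - θz) p(x - θz) dθ ν_J(dz). Then I is continuously differentiable and its divergence satisfies div I(x) = ∫_{ℝ^d} ∫_0^1 z · ∇(λp)(x - θz) dθ ν_J(dz) for every x ∈ ℝ^d. In particular, if p is strictly positive, then the nonlocal term of the Lévy–Fokker–Planck equation equals the divergence div( b̂_J(x) p(x) ) of the pure drift b̂_J(x) = ∫_{ℝ^d} ∫_0^1 z λ(x - θz) p(x - θz)/p(x) dθ ν_J(dz) against the density p. -/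
open MeasureTheory Filter Set
open scoped RealInnerProductSpace

noncomputable section

/-- Partial derivative in the `i`-th coordinate direction of `ℝ^d`. -/
def pdv {d : ℕ} (i : Fin d) (f : EuclideanSpace ℝ (Fin d) → ℝ)
    (x : EuclideanSpace ℝ (Fin d)) : ℝ :=
  fderiv ℝ f x (EuclideanSpace.single i 1)

set_option maxHeartbeats 2000000 in
/-- The vector field `I(x) = ∫∫₀¹ z λ(x-θz) p(x-θz) dθ ν_J(dz)` is C¹ and
`div I(x) = ∫∫₀¹ z·∇(λp)(x-θz) dθ ν_J(dz)`; in particular, if `p > 0`, the nonlocal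
term of the Lévy–Fokker–Planck equation is the divergence of the drift
`b̂_J(x) = ∫∫₀¹ z λ(x-θz) p(x-θz)/p(x) dθ ν_J(dz)` against the density `p`. -/
theorem nonlocal_term_as_divergence {d : ℕ}
    (lam p : EuclideanSpace ℝ (Fin d) → ℝ)
    (hlam : ContDiff ℝ 1 lam) (hp : ContDiff ℝ 1 p)
    (νJ : Measure (EuclideanSpace ℝ (Fin d))) [IsFiniteMeasure νJ]
    (hνJ : ∃ K : Set (EuclideanSpace ℝ (Fin d)), IsCompact K ∧ νJ Kᶜ = 0)
    (I : EuclideanSpace ℝ (Fin d) → EuclideanSpace ℝ (Fin d))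
    (hI : I = fun x =>
      ∫ z, (∫ θ in (0:ℝ)..1, (lam (x - θ • z) * p (x - θ • z)) • z) ∂νJ) :
    ContDiff ℝ 1 I ∧
    (∀ x, ∑ i, pdv i (fun y => I y i) x =
      ∫ z, (∫ θ in (0:ℝ)..1,
        ⟪z, gradient (fun y => lam y * p y) (x - θ • z)⟫) ∂νJ) ∧
    ((∀ x, 0 < p x) → ∀ x, I x =
      p x • ∫ z, (∫ θ in (0:ℝ)..1,
        (lam (x - θ • z) * p (x - θ • z) / p x) • z) ∂νJ) := by
  classical
  obtain ⟨K, hK, hK0⟩ := hνJ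
  set g : EuclideanSpace ℝ (Fin d) → ℝ := fun y => lam y * p y with hgdef
  have hg : ContDiff ℝ 1 g := hlam.mul hp
  have hgc : Continuous g := hg.continuous
  have hgd : Differentiable ℝ g := hg.differentiable one_ne_zero
  have hg' : Continuous (fun y => fderiv ℝ g y) := hg.continuous_fderiv one_ne_zero
  obtain ⟨R₀, hR₀⟩ := hK.isBounded.subset_closedBall 0
  set R : ℝ := max R₀ 0 with hRdef
  have hR0 : 0 ≤ R := le_max_right _ _
  have hzR : ∀ z ∈ K, ‖z‖ ≤ R := fun z hz => by
    have h := hR₀ hz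
    rw [Metric.mem_closedBall, dist_zero_right] at h
    exact h.trans (le_max_left _ _)
  set ρ : Measure ℝ := volume.restrict (Ioc (0:ℝ) 1) with hρ
  haveI : IsFiniteMeasure ρ := by
    constructor
    rw [hρ, Measure.restrict_apply_univ]
    simp
  set μ : Measure (EuclideanSpace ℝ (Fin d) × ℝ) := νJ.prod ρ with hμdef
  -- a.e. membership in `K ×ˢ Ioc 0 1`
  have hae : ∀ᵐ w : EuclideanSpace ℝ (Fin d) × ℝ ∂μ, w.1 ∈ K ∧ w.2 ∈ Ioc (0:ℝ) 1 := by
    have h1 : ∀ᵐ w : EuclideanSpace ℝ (Fin d) × ℝ ∂μ, w.1 ∈ K := by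
      rw [ae_iff]
      have hset : {w : EuclideanSpace ℝ (Fin d) × ℝ | ¬ w.1 ∈ K} = Kᶜ ×ˢ (univ : Set ℝ) := by
        ext w; simp [Set.mem_prod]
      rw [hset, hμdef, Measure.prod_prod, hK0, zero_mul]
    have h2 : ∀ᵐ w : EuclideanSpace ℝ (Fin d) × ℝ ∂μ, w.2 ∈ Ioc (0:ℝ) 1 := by
      rw [ae_iff]
      have hle : μ {w : EuclideanSpace ℝ (Fin d) × ℝ | ¬ w.2 ∈ Ioc (0:ℝ) 1}
          ≤ μ ((univ : Set (EuclideanSpace ℝ (Fin d))) ×ˢ (Ioc (0:ℝ) 1)ᶜ) := by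
        apply measure_mono
        intro w hw
        exact ⟨trivial, hw⟩
      have hz : μ ((univ : Set (EuclideanSpace ℝ (Fin d))) ×ˢ (Ioc (0:ℝ) 1)ᶜ) = 0 := by
        rw [hμdef, Measure.prod_prod, hρ, Measure.restrict_apply measurableSet_Ioc.compl]
        simp
      exact le_antisymm (hle.trans_eq hz) zero_le
    exact h1.and h2
  -- pointwise derivative
  have hptderiv : ∀ (x : EuclideanSpace ℝ (Fin d)) (w : EuclideanSpace ℝ (Fin d) × ℝ),
      HasFDerivAt (fun y => g (y - w.2 • w.1) • w.1)
        ((fderiv ℝ g (x - w.2 • w.1)).smulRight w.1) x := by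
    intro x w
    have h1 : HasFDerivAt (fun y : EuclideanSpace ℝ (Fin d) => y - w.2 • w.1)
        (ContinuousLinearMap.id ℝ (EuclideanSpace ℝ (Fin d))) x :=
      (hasFDerivAt_id x).sub_const _
    have h2 := ((hgd (x - w.2 • w.1)).hasFDerivAt.comp x h1)
    rw [ContinuousLinearMap.comp_id] at h2
    exact h2.smul_const w.1
  -- joint continuity of the candidate derivative
  have hF'joint : Continuous (fun q : EuclideanSpace ℝ (Fin d) × (EuclideanSpace ℝ (Fin d) × ℝ) =>
      (fderiv ℝ g (q.1 - q.2.2 • q.2.1)).smulRight q.2.1) := by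
    have h1 : Continuous (fun q : EuclideanSpace ℝ (Fin d) × (EuclideanSpace ℝ (Fin d) × ℝ) =>
        fderiv ℝ g (q.1 - q.2.2 • q.2.1)) :=
      hg'.comp (continuous_fst.sub ((continuous_snd.snd).smul (continuous_snd.fst)))
    exact isBoundedBilinearMap_smulRight.continuous.comp (h1.prodMk continuous_snd.fst)
  have hF'contw : ∀ x, Continuous (fun w : EuclideanSpace ℝ (Fin d) × ℝ =>
      (fderiv ℝ g (x - w.2 • w.1)).smulRight w.1) := fun x =>
    hF'joint.comp (continuous_const.prodMk continuous_id)
  have hF'contx : ∀ w : EuclideanSpace ℝ (Fin d) × ℝ, Continuous (fun x =>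
      (fderiv ℝ g (x - w.2 • w.1)).smulRight w.1) := fun w =>
    hF'joint.comp (continuous_id.prodMk continuous_const)
  have hFmeas : ∀ x, AEStronglyMeasurable
      (fun w : EuclideanSpace ℝ (Fin d) × ℝ => g (x - w.2 • w.1) • w.1) μ := by
    intro x
    exact ((hgc.comp (continuous_const.sub (continuous_snd.smul continuous_fst))).smul
      continuous_fst).aestronglyMeasurable
  -- main per-point facts
  have main : ∀ x₀ : EuclideanSpace ℝ (Fin d),
      Integrable (fun w : EuclideanSpace ℝ (Fin d) × ℝ => g (x₀ - w.2 • w.1) • w.1) μ ∧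
      Integrable (fun w : EuclideanSpace ℝ (Fin d) × ℝ =>
        (fderiv ℝ g (x₀ - w.2 • w.1)).smulRight w.1) μ ∧
      HasFDerivAt (fun x => ∫ w, g (x - w.2 • w.1) • w.1 ∂μ)
        (∫ w, (fderiv ℝ g (x₀ - w.2 • w.1)).smulRight w.1 ∂μ) x₀ ∧
      ContinuousAt (fun x => ∫ w, (fderiv ℝ g (x - w.2 • w.1)).smulRight w.1 ∂μ) x₀ := by
    intro x₀
    set S : Set (EuclideanSpace ℝ (Fin d)) := Metric.closedBall 0 (‖x₀‖ + 1 + R) with hS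
    have hScomp : IsCompact S := isCompact_closedBall _ _
    obtain ⟨C₁, hC₁⟩ := hScomp.exists_bound_of_continuousOn hgc.continuousOn
    obtain ⟨C₂, hC₂⟩ := hScomp.exists_bound_of_continuousOn hg'.continuousOn
    have h0S : (0 : EuclideanSpace ℝ (Fin d)) ∈ S := by
      rw [hS, Metric.mem_closedBall, dist_self]
      positivity
    have hC₁0 : 0 ≤ C₁ := le_trans (norm_nonneg _) (hC₁ 0 h0S)
    have hC₂0 : 0 ≤ C₂ := le_trans (norm_nonneg _) (hC₂ 0 h0S)
    have hmem : ∀ x ∈ Metric.ball x₀ 1, ∀ w : EuclideanSpace ℝ (Fin d) × ℝ,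
        w.1 ∈ K → w.2 ∈ Ioc (0:ℝ) 1 → x - w.2 • w.1 ∈ S := by
      intro x hx w hwK hwθ
      have hxx : ‖x - x₀‖ < 1 := mem_ball_iff_norm.mp hx
      have hx' : ‖x‖ ≤ ‖x₀‖ + 1 := by
        have h := norm_sub_norm_le x x₀
        linarith
      have hθ : |w.2| ≤ 1 := by
        rcases hwθ with ⟨ha, hb⟩
        rw [abs_le]; constructor <;> linarith
      have hz := hzR _ hwK
      have hbig : ‖x - w.2 • w.1‖ ≤ ‖x‖ + |w.2| * ‖w.1‖ := by
        calc ‖x - w.2 • w.1‖ ≤ ‖x‖ + ‖w.2 • w.1‖ := norm_sub_le _ _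
        _ = ‖x‖ + |w.2| * ‖w.1‖ := by rw [norm_smul, Real.norm_eq_abs]
      have hmul : |w.2| * ‖w.1‖ ≤ R := by
        calc |w.2| * ‖w.1‖ ≤ 1 * R := mul_le_mul hθ hz (norm_nonneg _) zero_le_one
        _ = R := one_mul R
      rw [hS, Metric.mem_closedBall, dist_zero_right]
      linarith
    have hbF' : ∀ᵐ w ∂μ, ∀ x ∈ Metric.ball x₀ 1,
        ‖(fderiv ℝ g (x - w.2 • w.1)).smulRight w.1‖ ≤ C₂ * R := by
      filter_upwards [hae] with w hw x hx
      rw [ContinuousLinearMap.norm_smulRight_apply]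
      exact mul_le_mul (hC₂ _ (hmem x hx w hw.1 hw.2)) (hzR _ hw.1) (norm_nonneg _) hC₂0
    have hFint : Integrable
        (fun w : EuclideanSpace ℝ (Fin d) × ℝ => g (x₀ - w.2 • w.1) • w.1) μ := by
      refine (integrable_const (C₁ * R)).mono' (hFmeas x₀) ?_
      filter_upwards [hae] with w hw
      rw [norm_smul]
      exact mul_le_mul (hC₁ _ (hmem x₀ (Metric.mem_ball_self one_pos) w hw.1 hw.2))
        (hzR _ hw.1) (norm_nonneg _) hC₁0
    have hF'int : Integrable (fun w : EuclideanSpace ℝ (Fin d) × ℝ =>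
        (fderiv ℝ g (x₀ - w.2 • w.1)).smulRight w.1) μ := by
      refine (integrable_const (C₂ * R)).mono' (hF'contw x₀).aestronglyMeasurable ?_
      filter_upwards [hbF'] with w hw
      exact hw x₀ (Metric.mem_ball_self one_pos)
    have hderiv : HasFDerivAt (fun x => ∫ w, g (x - w.2 • w.1) • w.1 ∂μ)
        (∫ w, (fderiv ℝ g (x₀ - w.2 • w.1)).smulRight w.1 ∂μ) x₀ := by
      apply hasFDerivAt_integral_of_dominated_of_fderiv_le (Metric.ball_mem_nhds x₀ one_pos)
        (Eventually.of_forall fun x => hFmeas x) hFint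
        (hF'contw x₀).aestronglyMeasurable hbF' (integrable_const _)
        (Eventually.of_forall fun w x hx => hptderiv x w)
    have hcont : ContinuousAt
        (fun x => ∫ w, (fderiv ℝ g (x - w.2 • w.1)).smulRight w.1 ∂μ) x₀ := by
      apply continuousAt_of_dominated (bound := fun _ => C₂ * R)
        (Eventually.of_forall fun x => (hF'contw x).aestronglyMeasurable)
      · refine Filter.eventually_of_mem (Metric.ball_mem_nhds x₀ one_pos) (fun x hx => ?_)
        filter_upwards [hbF'] with w hw
        exact hw x hx
      · exact integrable_const _
      · exact Eventually.of_forall fun w => (hF'contx w).continuousAt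
    exact ⟨hFint, hF'int, hderiv, hcont⟩
  -- rewriting I as a product-measure integral
  have hIrw : I = fun x => ∫ w, g (x - w.2 • w.1) • w.1 ∂μ := by
    funext x
    rw [hI]
    have hiter : ∀ z : EuclideanSpace ℝ (Fin d),
        (∫ θ in (0:ℝ)..1, (lam (x - θ • z) * p (x - θ • z)) • z)
          = ∫ θ, g (x - θ • z) • z ∂ρ := by
      intro z
      rw [intervalIntegral.integral_of_le zero_le_one]
    simp only [hiter]
    rw [hμdef]
    exact (MeasureTheory.integral_prod
      (fun w : EuclideanSpace ℝ (Fin d) × ℝ => g (x - w.2 • w.1) • w.1) (main x).1).symm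
  have hD : ∀ x, HasFDerivAt I
      (∫ w, (fderiv ℝ g (x - w.2 • w.1)).smulRight w.1 ∂μ) x := by
    intro x
    rw [hIrw]
    exact (main x).2.2.1
  refine ⟨?_, ?_, ?_⟩
  · -- C¹
    rw [contDiff_one_iff_fderiv]
    constructor
    · exact fun x => (hD x).differentiableAt
    · have hfe : fderiv ℝ I = fun x =>
          ∫ w, (fderiv ℝ g (x - w.2 • w.1)).smulRight w.1 ∂μ :=
        funext fun x => (hD x).fderiv
      rw [hfe]
      exact continuous_iff_continuousAt.mpr fun x => (main x).2.2.2
  · -- divergence identity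
    intro x
    set D : EuclideanSpace ℝ (Fin d) →L[ℝ] EuclideanSpace ℝ (Fin d) :=
      ∫ w, (fderiv ℝ g (x - w.2 • w.1)).smulRight w.1 ∂μ with hDdef
    have hF'int := (main x).2.1
    have hproj : ∀ i, pdv i (fun y => I y i) x = D (EuclideanSpace.single i 1) i := by
      intro i
      have h : HasFDerivAt (fun y => I y i)
          ((EuclideanSpace.proj (𝕜 := ℝ) i).comp D) x :=
        (EuclideanSpace.proj (𝕜 := ℝ) i).hasFDerivAt.comp x (hD x)
      unfold pdv
      rw [h.fderiv]
      rfl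
    have happly : ∀ i, D (EuclideanSpace.single i 1) i
        = ∫ w, ((fderiv ℝ g (x - w.2 • w.1)).smulRight w.1 (EuclideanSpace.single i 1)) i ∂μ := by
      intro i
      rw [hDdef, ContinuousLinearMap.integral_apply hF'int]
      exact ((EuclideanSpace.proj (𝕜 := ℝ) i).integral_comp_comm
        (hF'int.apply_continuousLinearMap _)).symm
    have hfin : ∀ i, Integrable (fun w : EuclideanSpace ℝ (Fin d) × ℝ =>
        ((fderiv ℝ g (x - w.2 • w.1)).smulRight w.1 (EuclideanSpace.single i 1)) i) μ :=
      fun i => (EuclideanSpace.proj (𝕜 := ℝ) i).integrable_comp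
        (hF'int.apply_continuousLinearMap _)
    have hpt : ∀ w : EuclideanSpace ℝ (Fin d) × ℝ,
        (∑ i, ((fderiv ℝ g (x - w.2 • w.1)).smulRight w.1 (EuclideanSpace.single i 1)) i)
          = ⟪w.1, gradient g (x - w.2 • w.1)⟫ := by
      intro w
      have hzsum : (∑ i, (w.1 i) • EuclideanSpace.single i (1:ℝ)) = w.1 := by
        ext j
        rw [WithLp.ofLp_sum, Finset.sum_apply]
        simp [EuclideanSpace.single_apply]
      have hgrad : ⟪w.1, gradient g (x - w.2 • w.1)⟫ = fderiv ℝ g (x - w.2 • w.1) w.1 := by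
        rw [real_inner_comm]
        exact InnerProductSpace.toDual_symm_apply
      rw [hgrad]
      calc (∑ i, ((fderiv ℝ g (x - w.2 • w.1)).smulRight w.1 (EuclideanSpace.single i 1)) i)
          = ∑ i, fderiv ℝ g (x - w.2 • w.1) ((w.1 i) • EuclideanSpace.single i 1) := by
            refine Finset.sum_congr rfl fun i _ => ?_
            simp [ContinuousLinearMap.smulRight_apply, mul_comm]
        _ = fderiv ℝ g (x - w.2 • w.1) (∑ i, (w.1 i) • EuclideanSpace.single i 1) := by
            rw [map_sum]
        _ = fderiv ℝ g (x - w.2 • w.1) w.1 := by rw [hzsum]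
    have hsumint : Integrable (fun w : EuclideanSpace ℝ (Fin d) × ℝ =>
        ⟪w.1, gradient g (x - w.2 • w.1)⟫) μ := by
      refine (integrable_finset_sum Finset.univ fun i _ => hfin i).congr
        (Eventually.of_forall fun w => ?_)
      exact hpt w
    calc (∑ i, pdv i (fun y => I y i) x)
        = ∑ i, D (EuclideanSpace.single i 1) i := by
          exact Finset.sum_congr rfl fun i _ => hproj i
      _ = ∑ i, ∫ w, ((fderiv ℝ g (x - w.2 • w.1)).smulRight w.1
            (EuclideanSpace.single i 1)) i ∂μ := by
          exact Finset.sum_congr rfl fun i _ => happly i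
      _ = ∫ w, ∑ i, ((fderiv ℝ g (x - w.2 • w.1)).smulRight w.1
            (EuclideanSpace.single i 1)) i ∂μ :=
          (integral_finset_sum Finset.univ fun i _ => hfin i).symm
      _ = ∫ w, ⟪w.1, gradient g (x - w.2 • w.1)⟫ ∂μ :=
          integral_congr_ae (Eventually.of_forall fun w => hpt w)
      _ = ∫ z, ∫ θ, ⟪z, gradient g (x - θ • z)⟫ ∂ρ ∂νJ :=
          MeasureTheory.integral_prod _ hsumint
      _ = ∫ z, (∫ θ in (0:ℝ)..1, ⟪z, gradient g (x - θ • z)⟫) ∂νJ := by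
          refine integral_congr_ae (Eventually.of_forall fun z => ?_)
          exact (intervalIntegral.integral_of_le zero_le_one).symm
  · -- drift form
    intro hpos x
    have hcongr : ∀ z : EuclideanSpace ℝ (Fin d),
        (∫ θ in (0:ℝ)..1, (lam (x - θ • z) * p (x - θ • z)) • z)
          = p x • ∫ θ in (0:ℝ)..1, (lam (x - θ • z) * p (x - θ • z) / p x) • z := by
      intro z
      rw [← intervalIntegral.integral_smul]
      refine intervalIntegral.integral_congr fun θ _ => ?_
      rw [smul_smul]
      congr 1
      rw [mul_comm (p x), div_mul_cancel₀ _ (ne_of_gt (hpos x))]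
    rw [hI]
    simp only [hcongr]
    rw [integral_smul]

end
end

section
/- Let λ, b_1, …, b_d : ℝ^d → ℝ be continuously differentiable, σ ∈ ℝ, and let ν_J be a finite Borel measure on ℝ^d with compact support. Let p : ℝ^d × (0,∞) → (0,∞) be strictly positive, twice continuously differentiable in x, and differentiable in t. Then p satisfies the Lévy–Fokker–Planck equation ∂_t p(x,t) = - Σ_i ∂_i( b_i(x) p(x,t) ) + (σ²/2) Δ_x p(x,t) - ∫_{ℝ^d} ∫_0^1 z · ∇_x( λ(·) p(·,t) )(x - θz) dθ ν_J(dz) for all (x,t) if and only if p satisfies the Fokker–Planck (continuity) equation ∂_t p(x,t) = - Σ_i ∂_i( b̂_i(x,t) p(x,t) ) + (σ²/2) Δ_x p(x,t) for all (x,t), where b̂(x,t) = b(x) + ∫_{ℝ^d} ∫_0^1 z λ(x - θz) p(x - θz, t)/p(x,t) dθ ν_J(dz). -/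
open MeasureTheory Filter Set
open scoped RealInnerProductSpace

set_option synthInstance.maxHeartbeats 1000000
set_option maxHeartbeats 2000000
set_option linter.unusedVariables false

noncomputable section

namespace LFPaux

variable {d : ℕ}

instance : IsFiniteMeasure (volume.restrict (Ioc (0:ℝ) 1)) := by
  constructor
  rw [Measure.restrict_apply_univ]
  simp [Real.volume_Ioc]

lemma ae_mem (νJ : Measure (EuclideanSpace ℝ (Fin d))) {K : Set (EuclideanSpace ℝ (Fin d))}
    (hK0 : νJ Kᶜ = 0) :
    ∀ᵐ q : EuclideanSpace ℝ (Fin d) × ℝ ∂(νJ.prod (volume.restrict (Ioc (0:ℝ) 1))),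
      q.1 ∈ K ∧ q.2 ∈ Ioc (0:ℝ) 1 := by
  have h1 : (νJ.prod (volume.restrict (Ioc (0:ℝ) 1))) (Kᶜ ×ˢ (univ : Set ℝ)) = 0 := by
    rw [Measure.prod_prod, hK0, zero_mul]
  have h2 : (νJ.prod (volume.restrict (Ioc (0:ℝ) 1)))
      ((univ : Set (EuclideanSpace ℝ (Fin d))) ×ˢ (Ioc (0:ℝ) 1)ᶜ) = 0 := by
    rw [Measure.prod_prod, Measure.restrict_apply measurableSet_Ioc.compl]
    simp
  rw [ae_iff]
  refine measure_mono_null (fun q hq => ?_) (measure_union_null h1 h2)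
  by_cases h : q.1 ∈ K
  · exact Or.inr ⟨mem_univ _, fun hc => hq ⟨h, hc⟩⟩
  · exact Or.inl ⟨h, mem_univ _⟩

lemma integrable_cont (νJ : Measure (EuclideanSpace ℝ (Fin d))) [IsFiniteMeasure νJ]
    {K : Set (EuclideanSpace ℝ (Fin d))} (hK : IsCompact K) (hK0 : νJ Kᶜ = 0)
    {G : Type*} [NormedAddCommGroup G] (f : EuclideanSpace ℝ (Fin d) × ℝ → G)
    (hf : Continuous f) :
    Integrable f (νJ.prod (volume.restrict (Ioc (0:ℝ) 1))) := by
  obtain ⟨C, hC⟩ := (hK.prod isCompact_Icc).exists_bound_of_continuousOn hf.continuousOn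
  refine (integrable_const C).mono' hf.aestronglyMeasurable ?_
  filter_upwards [ae_mem νJ hK0] with q hq
  exact hC q ⟨hq.1, Ioc_subset_Icc_self hq.2⟩

lemma abs_coord_le_norm (z : EuclideanSpace ℝ (Fin d)) (i : Fin d) : |z i| ≤ ‖z‖ := by
  have h := abs_real_inner_le_norm (EuclideanSpace.single i (1:ℝ)) z
  rw [EuclideanSpace.inner_single_left] at h
  simpa [EuclideanSpace.norm_single] using h

lemma key_deriv (νJ : Measure (EuclideanSpace ℝ (Fin d))) [IsFiniteMeasure νJ]
    {K : Set (EuclideanSpace ℝ (Fin d))} (hK : IsCompact K) (hK0 : νJ Kᶜ = 0)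
    (g : EuclideanSpace ℝ (Fin d) → ℝ) (hg : ContDiff ℝ 1 g)
    (x : EuclideanSpace ℝ (Fin d)) (i : Fin d) :
    HasFDerivAt
      (fun y : EuclideanSpace ℝ (Fin d) =>
        ∫ q : EuclideanSpace ℝ (Fin d) × ℝ, g (y - q.2 • q.1) * q.1 i
          ∂(νJ.prod (volume.restrict (Ioc (0:ℝ) 1))))
      (∫ q : EuclideanSpace ℝ (Fin d) × ℝ, q.1 i • fderiv ℝ g (x - q.2 • q.1)
          ∂(νJ.prod (volume.restrict (Ioc (0:ℝ) 1)))) x := by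
  obtain ⟨R, hR⟩ := hK.isBounded.subset_closedBall 0
  obtain ⟨M, hM⟩ := (isCompact_closedBall x (1 + R)).exists_bound_of_continuousOn
    (hg.continuous_fderiv one_ne_zero).continuousOn
  have hmem : ∀ x' ∈ Metric.ball x 1, ∀ z ∈ K, ∀ θ ∈ Icc (0:ℝ) 1,
      x' - θ • z ∈ Metric.closedBall x (1 + R) := by
    intro x' hx' z hz θ hθ
    rw [Metric.mem_closedBall, dist_eq_norm]
    have h1 : ‖x' - θ • z - x‖ ≤ ‖x' - x‖ + ‖θ • z‖ := by
      have : x' - θ • z - x = (x' - x) + (-(θ • z)) := by abel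
      rw [this]
      simpa using norm_add_le (x' - x) (-(θ • z))
    have h2 : ‖x' - x‖ ≤ 1 := le_of_lt (by simpa [dist_eq_norm] using hx')
    have h3 : ‖θ • z‖ ≤ R := by
      rw [norm_smul]
      have hzR : ‖z‖ ≤ R := by simpa [dist_eq_norm] using hR hz
      have hz0 : (0:ℝ) ≤ ‖z‖ := norm_nonneg _
      have : ‖θ‖ ≤ 1 := by rw [Real.norm_eq_abs, abs_le]; constructor <;> linarith [hθ.1, hθ.2]
      nlinarith [norm_nonneg θ]
    linarith
  have hcont_sub : Continuous fun q : EuclideanSpace ℝ (Fin d) × ℝ => x - q.2 • q.1 :=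
    continuous_const.sub (continuous_snd.smul continuous_fst)
  have hcoord : Continuous fun q : EuclideanSpace ℝ (Fin d) × ℝ => q.1 i :=
    (EuclideanSpace.proj i).continuous.comp continuous_fst
  apply hasFDerivAt_integral_of_dominated_of_fderiv_le (s := Metric.ball x 1)
    (F := fun y (q : EuclideanSpace ℝ (Fin d) × ℝ) => g (y - q.2 • q.1) * q.1 i)
    (F' := fun x' (q : EuclideanSpace ℝ (Fin d) × ℝ) => q.1 i • fderiv ℝ g (x' - q.2 • q.1))
    (bound := fun _ => |R| * |M|) (Metric.ball_mem_nhds x one_pos)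
  · filter_upwards with x'
    exact ((hg.continuous.comp
      (continuous_const.sub (continuous_snd.smul continuous_fst))).mul hcoord).aestronglyMeasurable
  · exact integrable_cont νJ hK hK0 _
      ((hg.continuous.comp hcont_sub).mul hcoord)
  · exact (hcoord.smul ((hg.continuous_fderiv one_ne_zero).comp hcont_sub)).aestronglyMeasurable
  · filter_upwards [ae_mem νJ hK0] with q hq
    intro x' hx'
    rw [norm_smul (q.1 i) (fderiv ℝ g (x' - q.2 • q.1))]
    have h1 : ‖q.1 i‖ ≤ |R| := by
      refine le_trans ?_ (le_abs_self R)
      exact le_trans (abs_coord_le_norm q.1 i) (by simpa [dist_eq_norm] using hR hq.1)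
    have h2 : ‖fderiv ℝ g (x' - q.2 • q.1)‖ ≤ |M| := by
      refine le_trans ?_ (le_abs_self M)
      exact hM _ (hmem x' hx' q.1 hq.1 q.2 (Ioc_subset_Icc_self hq.2))
    exact mul_le_mul h1 h2 (norm_nonneg _) (abs_nonneg _)
  · exact integrable_const _
  · filter_upwards with q
    intro x' hx'
    have h0 : HasFDerivAt (fun y : EuclideanSpace ℝ (Fin d) => y - q.2 • q.1)
        (ContinuousLinearMap.id ℝ (EuclideanSpace ℝ (Fin d))) x' :=
      (hasFDerivAt_id x').sub_const _
    have h1 : HasFDerivAt (fun y => g (y - q.2 • q.1)) (fderiv ℝ g (x' - q.2 • q.1)) x' := by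
      simpa [Function.comp_def] using ((hg.differentiable one_ne_zero (x' - q.2 • q.1)).hasFDerivAt.comp x' h0)
    exact h1.mul_const _

lemma sum_coord_apply (z : EuclideanSpace ℝ (Fin d)) (L : EuclideanSpace ℝ (Fin d) →L[ℝ] ℝ) :
    ∑ i, z i * L (EuclideanSpace.single i 1) = L z := by
  have hz : ∑ i, z i • EuclideanSpace.single i (1:ℝ) = z := by
    simpa [EuclideanSpace.basisFun_apply, EuclideanSpace.basisFun_repr] using
      (EuclideanSpace.basisFun (Fin d) ℝ).sum_repr z
  conv_rhs => rw [← hz]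
  rw [map_sum]
  simp [smul_eq_mul]

lemma fderiv_apply_eq_inner_gradient (g : EuclideanSpace ℝ (Fin d) → ℝ)
    (y z : EuclideanSpace ℝ (Fin d)) :
    (fderiv ℝ g y) z = ⟪z, gradient g y⟫ := by
  rw [real_inner_comm]
  exact (InnerProductSpace.toDual_symm_apply).symm

end LFPaux

/-- Probability-flow equivalence at the PDE level: a positive density
`p(x,t)` solves the Lévy–Fokker–Planck equation of a jump-diffusion with finite jump
activity iff it solves the Fokker–Planck (continuity) equation of an Itô diffusion
with the modified drift
`b̂(x,t) = b(x) + ∫∫₀¹ z λ(x-θz) p(x-θz,t)/p(x,t) dθ ν_J(dz)`. -/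
theorem levyFokkerPlanck_iff_fokkerPlanck {d : ℕ}
    (lam : EuclideanSpace ℝ (Fin d) → ℝ)
    (b : EuclideanSpace ℝ (Fin d) → EuclideanSpace ℝ (Fin d))
    (hlam : ContDiff ℝ 1 lam) (hb : ContDiff ℝ 1 b) (σ : ℝ)
    (νJ : Measure (EuclideanSpace ℝ (Fin d))) [IsFiniteMeasure νJ]
    (hνJ : ∃ K : Set (EuclideanSpace ℝ (Fin d)), IsCompact K ∧ νJ Kᶜ = 0)
    (p : EuclideanSpace ℝ (Fin d) → ℝ → ℝ)
    (hpos : ∀ x t, 0 < t → 0 < p x t)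
    (hpx : ∀ t : ℝ, 0 < t → ContDiff ℝ 2 (fun x => p x t))
    (hpt : ∀ x t, 0 < t → DifferentiableAt ℝ (p x) t) :
    (∀ x t, 0 < t →
      deriv (p x) t =
        -(∑ i, pdv i (fun y => b y i * p y t) x)
          + σ ^ 2 / 2 * ∑ i, pdv i (fun y => pdv i (fun w => p w t) y) x
          - ∫ z, (∫ θ in (0:ℝ)..1,
              ⟪z, gradient (fun y => lam y * p y t) (x - θ • z)⟫) ∂νJ)
    ↔ (∀ x t, 0 < t →
      deriv (p x) t =
        -(∑ i, pdv i (fun y =>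
            (b y i + ∫ z, (∫ θ in (0:ℝ)..1,
              lam (y - θ • z) * p (y - θ • z) t / p y t * z i) ∂νJ) * p y t) x)
          + σ ^ 2 / 2 * ∑ i, pdv i (fun y => pdv i (fun w => p w t) y) x) := by
  obtain ⟨K, hK, hK0⟩ := hνJ
  have key : ∀ (x : EuclideanSpace ℝ (Fin d)) (t : ℝ), 0 < t →
      (∑ i, pdv i (fun y =>
            (b y i + ∫ z, (∫ θ in (0:ℝ)..1,
              lam (y - θ • z) * p (y - θ • z) t / p y t * z i) ∂νJ) * p y t) x)
      = (∑ i, pdv i (fun y => b y i * p y t) x)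
        + ∫ z, (∫ θ in (0:ℝ)..1,
            ⟪z, gradient (fun y => lam y * p y t) (x - θ • z)⟫) ∂νJ := by
    intro x t ht
    set μ := νJ.prod (volume.restrict (Ioc (0:ℝ) 1)) with hμ
    set g : EuclideanSpace ℝ (Fin d) → ℝ := fun y => lam y * p y t with hgdef
    have hg : ContDiff ℝ 1 g := hlam.mul ((hpx t ht).of_le one_le_two)
    have hgc : Continuous g := hg.continuous
    have hcont_sub : ∀ y : EuclideanSpace ℝ (Fin d),
        Continuous fun q : EuclideanSpace ℝ (Fin d) × ℝ => y - q.2 • q.1 := fun y =>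
      continuous_const.sub (continuous_snd.smul continuous_fst)
    have hcoord : ∀ i : Fin d, Continuous fun q : EuclideanSpace ℝ (Fin d) × ℝ => q.1 i :=
      fun i => (EuclideanSpace.proj i).continuous.comp continuous_fst
    -- Step 1: rewrite the modified-drift integrand
    have hfun : ∀ i : Fin d, (fun y =>
          (b y i + ∫ z, (∫ θ in (0:ℝ)..1,
            lam (y - θ • z) * p (y - θ • z) t / p y t * z i) ∂νJ) * p y t)
        = fun y => b y i * p y t + ∫ q : EuclideanSpace ℝ (Fin d) × ℝ,
            g (y - q.2 • q.1) * q.1 i ∂μ := by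
      intro i
      funext y
      have hc : p y t ≠ 0 := (hpos y t ht).ne'
      have hint : Integrable (fun q : EuclideanSpace ℝ (Fin d) × ℝ =>
          g (y - q.2 • q.1) * q.1 i) μ :=
        LFPaux.integrable_cont νJ hK hK0 _ ((hgc.comp (hcont_sub y)).mul (hcoord i))
      have hprod : (∫ q : EuclideanSpace ℝ (Fin d) × ℝ, g (y - q.2 • q.1) * q.1 i ∂μ)
          = ∫ z, (∫ θ in (0:ℝ)..1, g (y - θ • z) * z i) ∂νJ := by
        rw [hμ, integral_prod _ hint]
        refine integral_congr_ae (Eventually.of_forall fun z => ?_)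
        dsimp only
        rw [intervalIntegral.integral_of_le zero_le_one]
      have hmul : (∫ z, (∫ θ in (0:ℝ)..1,
            lam (y - θ • z) * p (y - θ • z) t / p y t * z i) ∂νJ) * p y t
          = ∫ z, (∫ θ in (0:ℝ)..1, g (y - θ • z) * z i) ∂νJ := by
        rw [← integral_mul_const]
        refine integral_congr_ae (Eventually.of_forall fun z => ?_)
        dsimp only
        rw [← intervalIntegral.integral_mul_const]
        refine intervalIntegral.integral_congr fun θ _ => ?_
        simp only [hgdef]
        field_simp
      calc (b y i + ∫ z, (∫ θ in (0:ℝ)..1,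
            lam (y - θ • z) * p (y - θ • z) t / p y t * z i) ∂νJ) * p y t
          = b y i * p y t + (∫ z, (∫ θ in (0:ℝ)..1,
            lam (y - θ • z) * p (y - θ • z) t / p y t * z i) ∂νJ) * p y t := by ring
        _ = b y i * p y t + ∫ q : EuclideanSpace ℝ (Fin d) × ℝ,
            g (y - q.2 • q.1) * q.1 i ∂μ := by rw [hmul, hprod]
    -- Step 2: compute pdv of each summand
    have hpdv : ∀ i : Fin d, pdv i (fun y => b y i * p y t + ∫ q : EuclideanSpace ℝ (Fin d) × ℝ,
          g (y - q.2 • q.1) * q.1 i ∂μ) x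
        = pdv i (fun y => b y i * p y t) x
          + ∫ q : EuclideanSpace ℝ (Fin d) × ℝ,
              q.1 i * (fderiv ℝ g (x - q.2 • q.1)) (EuclideanSpace.single i 1) ∂μ := by
      intro i
      have hGder := LFPaux.key_deriv νJ hK hK0 g hg x i
      have hint' : Integrable (fun q : EuclideanSpace ℝ (Fin d) × ℝ =>
          q.1 i • fderiv ℝ g (x - q.2 • q.1)) μ :=
        LFPaux.integrable_cont νJ hK hK0 _
          ((hcoord i).smul ((hg.continuous_fderiv one_ne_zero).comp (hcont_sub x)))
      have hd1 : DifferentiableAt ℝ (fun y => b y i * p y t) x :=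
        ((contDiff_euclidean.mp hb i).differentiable one_ne_zero x).mul
          ((hpx t ht).differentiable two_ne_zero x)
      unfold pdv
      rw [fderiv_fun_add hd1 hGder.differentiableAt, ContinuousLinearMap.add_apply,
        hGder.fderiv, ContinuousLinearMap.integral_apply hint']
      congr 1
    -- Step 3: sum over i, swap with the integral
    have hsummand_int : ∀ i : Fin d, Integrable (fun q : EuclideanSpace ℝ (Fin d) × ℝ =>
        q.1 i * (fderiv ℝ g (x - q.2 • q.1)) (EuclideanSpace.single i 1)) μ := fun i =>
      LFPaux.integrable_cont νJ hK hK0 _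
        ((hcoord i).mul
          ((((hg.continuous_fderiv one_ne_zero).comp (hcont_sub x))).clm_apply continuous_const))
    have hgradcont : Continuous fun q : EuclideanSpace ℝ (Fin d) × ℝ =>
        ⟪q.1, gradient g (x - q.2 • q.1)⟫ := by
      have h1 : Continuous (gradient g) := by
        show Continuous fun y =>
          (InnerProductSpace.toDual ℝ (EuclideanSpace ℝ (Fin d))).symm (fderiv ℝ g y)
        exact (InnerProductSpace.toDual ℝ
          (EuclideanSpace ℝ (Fin d))).symm.continuous.comp (hg.continuous_fderiv one_ne_zero)
      exact continuous_fst.inner (h1.comp (hcont_sub x))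
    calc (∑ i, pdv i (fun y =>
            (b y i + ∫ z, (∫ θ in (0:ℝ)..1,
              lam (y - θ • z) * p (y - θ • z) t / p y t * z i) ∂νJ) * p y t) x)
        = ∑ i, (pdv i (fun y => b y i * p y t) x
            + ∫ q : EuclideanSpace ℝ (Fin d) × ℝ,
                q.1 i * (fderiv ℝ g (x - q.2 • q.1)) (EuclideanSpace.single i 1) ∂μ) :=
          Finset.sum_congr rfl fun i _ => by rw [hfun i]; exact hpdv i
      _ = (∑ i, pdv i (fun y => b y i * p y t) x)
            + ∑ i, ∫ q : EuclideanSpace ℝ (Fin d) × ℝ,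
                q.1 i * (fderiv ℝ g (x - q.2 • q.1)) (EuclideanSpace.single i 1) ∂μ := by
          rw [Finset.sum_add_distrib]
      _ = (∑ i, pdv i (fun y => b y i * p y t) x)
            + ∫ q : EuclideanSpace ℝ (Fin d) × ℝ,
                ⟪q.1, gradient g (x - q.2 • q.1)⟫ ∂μ := by
          congr 1
          rw [← integral_finset_sum Finset.univ fun i _ => hsummand_int i]
          refine integral_congr_ae (Eventually.of_forall fun q => ?_)
          dsimp only
          rw [LFPaux.sum_coord_apply, LFPaux.fderiv_apply_eq_inner_gradient]
      _ = (∑ i, pdv i (fun y => b y i * p y t) x)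
            + ∫ z, (∫ θ in (0:ℝ)..1, ⟪z, gradient g (x - θ • z)⟫) ∂νJ := by
          congr 1
          rw [hμ, integral_prod _ (LFPaux.integrable_cont νJ hK hK0 _ hgradcont)]
          refine integral_congr_ae (Eventually.of_forall fun z => ?_)
          dsimp only
          rw [intervalIntegral.integral_of_le zero_le_one]
  constructor
  · intro h x t ht
    rw [key x t ht, h x t ht]
    ring
  · intro h x t ht
    have h1 := h x t ht
    rw [key x t ht] at h1
    rw [h1]
    ring

end
end
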